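/- Let C be a left rigid bar category. Then C is right rigid: for each object X, the object X° := ((X̄)')‾ together with ev^R := ⋆⁻¹ ∘ (ev^L_{X̄})‾ ∘ Υ⁻¹ ∘ (bb⊗id) : X⊗X° → 1 and coev^R := (id⊗bb⁻¹) ∘ Υ ∘ (coev^L_{X̄})‾ ∘ ⋆ : 1 → X°⊗X satisfies the right-duality triangle identities, e.g. ev^R ∘ Φ⁻¹ ∘ (id⊗coev^R) = id_X (with unit isomorphisms inserted). -/

import Mathlib

open CategoryTheory MonoidalCategory

universe v u

/-- A bar category (Beggs–Majid): monoidal category with bar functor, `bb`, `⋆` and `Υ`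
satisfying axioms a)–d). -/
structure BarCategoryStruct (C : Type u) [Category.{v} C] [MonoidalCategory C] where
  bar : C ⥤ C
  bb : 𝟭 C ≅ bar ⋙ bar
  star : 𝟙_ C ≅ bar.obj (𝟙_ C)
  Upsilon : ∀ X Y : C, bar.obj (X ⊗ Y) ≅ bar.obj Y ⊗ bar.obj X
  upsilon_natural : ∀ {X Y X' Y' : C} (θ : X ⟶ X') (φ : Y ⟶ Y'),
    bar.map (θ ⊗ₘ φ) ≫ (Upsilon X' Y').hom =
      (Upsilon X Y).hom ≫ (bar.map φ ⊗ₘ bar.map θ)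
  axiom_a1 : ∀ X : C,
    bar.map (ρ_ X).inv ≫ (Upsilon X (𝟙_ C)).hom ≫ (star.inv ⊗ₘ 𝟙 (bar.obj X)) =
      (λ_ (bar.obj X)).inv
  axiom_a2 : ∀ X : C,
    bar.map (λ_ X).inv ≫ (Upsilon (𝟙_ C) X).hom ≫ (𝟙 (bar.obj X) ⊗ₘ star.inv) =
      (ρ_ (bar.obj X)).inv
  axiom_b : ∀ X Y Z : C,
    bar.map (α_ X Y Z).hom ≫ (Upsilon X (Y ⊗ Z)).hom ≫
        ((Upsilon Y Z).hom ⊗ₘ 𝟙 (bar.obj X)) ≫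
        (α_ (bar.obj Z) (bar.obj Y) (bar.obj X)).hom =
      (Upsilon (X ⊗ Y) Z).hom ≫ (𝟙 (bar.obj Z) ⊗ₘ (Upsilon X Y).hom)
  axiom_c : star.hom ≫ bar.map star.hom = bb.hom.app (𝟙_ C)
  axiom_d : ∀ X : C, bar.map (bb.hom.app X) = bb.hom.app (bar.obj X)

variable {C : Type u} [Category.{v} C] [MonoidalCategory C]

namespace BarCategoryStruct
variable (B : BarCategoryStruct C)

lemma map_leftUnitor_inv (X : C) :
    B.bar.map (λ_ X).inv =
      (ρ_ (B.bar.obj X)).inv ≫ (𝟙 _ ⊗ₘ B.star.hom) ≫ (B.Upsilon (𝟙_ C) X).inv := by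
  rw [← B.axiom_a2 X]
  simp [MonoidalCategory.tensorHom_def]

lemma map_rightUnitor_inv (X : C) :
    B.bar.map (ρ_ X).inv =
      (λ_ (B.bar.obj X)).inv ≫ (B.star.hom ⊗ₘ 𝟙 _) ≫ (B.Upsilon X (𝟙_ C)).inv := by
  rw [← B.axiom_a1 X]
  simp [MonoidalCategory.tensorHom_def]

lemma map_leftUnitor_hom (X : C) :
    B.bar.map (λ_ X).hom =
      (B.Upsilon (𝟙_ C) X).hom ≫ (𝟙 _ ⊗ₘ B.star.inv) ≫ (ρ_ (B.bar.obj X)).hom := by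
  rw [← cancel_epi (B.bar.map (λ_ X).inv), ← B.bar.map_comp]
  simp [B.map_leftUnitor_inv, MonoidalCategory.tensorHom_def]

lemma map_rightUnitor_hom (X : C) :
    B.bar.map (ρ_ X).hom =
      (B.Upsilon X (𝟙_ C)).hom ≫ (B.star.inv ⊗ₘ 𝟙 _) ≫ (λ_ (B.bar.obj X)).hom := by
  rw [← cancel_epi (B.bar.map (ρ_ X).inv), ← B.bar.map_comp]
  simp [B.map_rightUnitor_inv, MonoidalCategory.tensorHom_def]

lemma map_tensor {X Y X' Y' : C} (θ : X ⟶ X') (φ : Y ⟶ Y') :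
    B.bar.map (θ ⊗ₘ φ) =
      (B.Upsilon X Y).hom ≫ (B.bar.map φ ⊗ₘ B.bar.map θ) ≫ (B.Upsilon X' Y').inv := by
  rw [← Category.assoc, Iso.eq_comp_inv]
  exact B.upsilon_natural θ φ

lemma map_associator_hom (X Y Z : C) :
    B.bar.map (α_ X Y Z).hom =
      (B.Upsilon (X ⊗ Y) Z).hom ≫ (𝟙 _ ⊗ₘ (B.Upsilon X Y).hom) ≫
        (α_ (B.bar.obj Z) (B.bar.obj Y) (B.bar.obj X)).inv ≫
        ((B.Upsilon Y Z).inv ⊗ₘ 𝟙 _) ≫ (B.Upsilon X (Y ⊗ Z)).inv := by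
  have h := B.axiom_b X Y Z
  simp only [tensorHom_id, id_tensorHom] at h ⊢
  have h' := reassoc_of% h
  rw [← h']
  simp

lemma map_associator_inv (X Y Z : C) :
    B.bar.map (α_ X Y Z).inv =
      (B.Upsilon X (Y ⊗ Z)).hom ≫ ((B.Upsilon Y Z).hom ⊗ₘ 𝟙 _) ≫
        (α_ (B.bar.obj Z) (B.bar.obj Y) (B.bar.obj X)).hom ≫
        (𝟙 _ ⊗ₘ (B.Upsilon X Y).inv) ≫ (B.Upsilon (X ⊗ Y) Z).inv := by
  rw [← cancel_epi (B.bar.map (α_ X Y Z).hom), ← B.bar.map_comp]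
  simp [B.map_associator_hom, MonoidalCategory.tensorHom_def]

lemma bar_tri1 {Y E : C} (ev : E ⊗ Y ⟶ 𝟙_ C) (coev : 𝟙_ C ⟶ Y ⊗ E)
    (h1 : (λ_ Y).inv ≫ (coev ⊗ₘ 𝟙 Y) ≫ (α_ Y E Y).hom ≫ (𝟙 Y ⊗ₘ ev) ≫ (ρ_ Y).hom = 𝟙 Y) :
    (ρ_ (B.bar.obj Y)).inv ≫
      (𝟙 (B.bar.obj Y) ⊗ₘ (B.star.hom ≫ B.bar.map coev ≫ (B.Upsilon Y E).hom)) ≫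
      (α_ (B.bar.obj Y) (B.bar.obj E) (B.bar.obj Y)).inv ≫
      (((B.Upsilon E Y).inv ≫ B.bar.map ev ≫ B.star.inv) ⊗ₘ 𝟙 (B.bar.obj Y)) ≫
      (λ_ (B.bar.obj Y)).hom = 𝟙 (B.bar.obj Y) := by
  have h := congrArg B.bar.map h1
  simp only [Functor.map_comp, Functor.map_id] at h
  rw [B.map_leftUnitor_inv, B.map_tensor, B.map_tensor, B.map_associator_hom,
    B.map_rightUnitor_hom] at h
  simp only [CategoryTheory.Functor.map_id, Category.assoc, Iso.inv_hom_id_assoc] at h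
  simpa using h

lemma bar_tri2 {Y E : C} (ev : E ⊗ Y ⟶ 𝟙_ C) (coev : 𝟙_ C ⟶ Y ⊗ E)
    (h2 : (ρ_ E).inv ≫ (𝟙 E ⊗ₘ coev) ≫ (α_ E Y E).inv ≫ (ev ⊗ₘ 𝟙 E) ≫ (λ_ E).hom = 𝟙 E) :
    (λ_ (B.bar.obj E)).inv ≫
      ((B.star.hom ≫ B.bar.map coev ≫ (B.Upsilon Y E).hom) ⊗ₘ 𝟙 (B.bar.obj E)) ≫
      (α_ (B.bar.obj E) (B.bar.obj Y) (B.bar.obj E)).hom ≫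
      (𝟙 (B.bar.obj E) ⊗ₘ ((B.Upsilon E Y).inv ≫ B.bar.map ev ≫ B.star.inv)) ≫
      (ρ_ (B.bar.obj E)).hom = 𝟙 (B.bar.obj E) := by
  have h := congrArg B.bar.map h2
  simp only [Functor.map_comp, Functor.map_id] at h
  rw [B.map_rightUnitor_inv, B.map_tensor, B.map_tensor, B.map_associator_inv,
    B.map_leftUnitor_hom] at h
  simp only [CategoryTheory.Functor.map_id, Category.assoc, Iso.inv_hom_id_assoc] at h
  simpa using h

end BarCategoryStruct

lemma transport_tri1 {X Y Xo : C} (f : X ≅ Y) (ev : Y ⊗ Xo ⟶ 𝟙_ C) (coev : 𝟙_ C ⟶ Xo ⊗ Y)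
    (t1 : (ρ_ Y).inv ≫ (𝟙 Y ⊗ₘ coev) ≫ (α_ Y Xo Y).inv ≫ (ev ⊗ₘ 𝟙 Y) ≫ (λ_ Y).hom = 𝟙 Y) :
    (ρ_ X).inv ≫ (𝟙 X ⊗ₘ (coev ≫ (𝟙 Xo ⊗ₘ f.inv))) ≫ (α_ X Xo X).inv ≫
      (((f.hom ⊗ₘ 𝟙 Xo) ≫ ev) ⊗ₘ 𝟙 X) ≫ (λ_ X).hom = 𝟙 X := by
  simp only [tensorHom_id, id_tensorHom] at t1 ⊢
  simp only [MonoidalCategory.whiskerLeft_comp, comp_whiskerRight, Category.assoc]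
  slice_lhs 3 4 => rw [associator_inv_naturality_right]
  slice_lhs 4 5 => rw [whisker_exchange]
  slice_lhs 5 6 => rw [whisker_exchange]
  slice_lhs 6 7 => rw [leftUnitor_naturality]
  slice_lhs 3 4 => rw [← associator_inv_naturality_left]
  slice_lhs 2 3 => rw [whisker_exchange]
  slice_lhs 1 2 => rw [← rightUnitor_inv_naturality]
  slice_lhs 2 6 => rw [t1]
  simp

lemma transport_tri2 {X Y Xo : C} (f : X ≅ Y) (ev : Y ⊗ Xo ⟶ 𝟙_ C) (coev : 𝟙_ C ⟶ Xo ⊗ Y)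
    (t2 : (λ_ Xo).inv ≫ (coev ⊗ₘ 𝟙 Xo) ≫ (α_ Xo Y Xo).hom ≫ (𝟙 Xo ⊗ₘ ev) ≫ (ρ_ Xo).hom = 𝟙 Xo) :
    (λ_ Xo).inv ≫ ((coev ≫ (𝟙 Xo ⊗ₘ f.inv)) ⊗ₘ 𝟙 Xo) ≫ (α_ Xo X Xo).hom ≫
      (𝟙 Xo ⊗ₘ ((f.hom ⊗ₘ 𝟙 Xo) ≫ ev)) ≫ (ρ_ Xo).hom = 𝟙 Xo := by
  simp only [tensorHom_id, id_tensorHom] at t2 ⊢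
  simp only [MonoidalCategory.whiskerLeft_comp, comp_whiskerRight, Category.assoc]
  slice_lhs 3 4 => rw [associator_naturality_middle]
  slice_lhs 4 5 => rw [← MonoidalCategory.whiskerLeft_comp, ← comp_whiskerRight,
    Iso.inv_hom_id, id_whiskerRight, MonoidalCategory.whiskerLeft_id]
  simpa using t2

/-- In a left rigid bar category, each object has a right dual: given left duals `D X` with
evaluation `ev : D X ⊗ X ⟶ 𝟙_` and coevaluation `coev : 𝟙_ ⟶ X ⊗ D X` satisfying the
triangle identities, the object `X° := ((X̄)')‾` together with
`ev^R = ⋆⁻¹ ∘ (ev^L_{X̄})‾ ∘ Υ⁻¹ ∘ (bb ⊗ id)` and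
`coev^R = (id ⊗ bb⁻¹) ∘ Υ ∘ (coev^L_{X̄})‾ ∘ ⋆` satisfies the right-duality triangle
identities. -/
theorem right_rigid_of_left_rigid_bar (B : BarCategoryStruct C)
    (D : C → C) (ev : ∀ X : C, D X ⊗ X ⟶ 𝟙_ C) (coev : ∀ X : C, 𝟙_ C ⟶ X ⊗ D X)
    (htri1 : ∀ X : C,
      (λ_ X).inv ≫ (coev X ⊗ₘ 𝟙 X) ≫ (α_ X (D X) X).hom ≫ (𝟙 X ⊗ₘ ev X) ≫ (ρ_ X).hom =
        𝟙 X)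
    (htri2 : ∀ X : C,
      (ρ_ (D X)).inv ≫ (𝟙 (D X) ⊗ₘ coev X) ≫ (α_ (D X) X (D X)).inv ≫
          (ev X ⊗ₘ 𝟙 (D X)) ≫ (λ_ (D X)).hom = 𝟙 (D X)) :
    ∀ X : C,
      let Xo : C := B.bar.obj (D (B.bar.obj X))
      let evR : X ⊗ Xo ⟶ 𝟙_ C :=
        (B.bb.hom.app X ⊗ₘ 𝟙 Xo) ≫ (B.Upsilon (D (B.bar.obj X)) (B.bar.obj X)).inv ≫
          B.bar.map (ev (B.bar.obj X)) ≫ B.star.inv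
      let coevR : 𝟙_ C ⟶ Xo ⊗ X :=
        B.star.hom ≫ B.bar.map (coev (B.bar.obj X)) ≫
          (B.Upsilon (B.bar.obj X) (D (B.bar.obj X))).hom ≫ (𝟙 Xo ⊗ₘ B.bb.inv.app X)
      ((ρ_ X).inv ≫ (𝟙 X ⊗ₘ coevR) ≫ (α_ X Xo X).inv ≫ (evR ⊗ₘ 𝟙 X) ≫ (λ_ X).hom =
        𝟙 X) ∧
      ((λ_ Xo).inv ≫ (coevR ⊗ₘ 𝟙 Xo) ≫ (α_ Xo X Xo).hom ≫ (𝟙 Xo ⊗ₘ evR) ≫ (ρ_ Xo).hom =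
        𝟙 Xo) := by
  intro X
  dsimp only
  constructor
  · have T := transport_tri1 (B.bb.app X) _ _
      (B.bar_tri1 (ev (B.bar.obj X)) (coev (B.bar.obj X)) (htri1 (B.bar.obj X)))
    simpa only [Iso.app_hom, Iso.app_inv, Category.assoc, Functor.comp_obj,
      Functor.id_obj] using T
  · have T := transport_tri2 (B.bb.app X) _ _
      (B.bar_tri2 (ev (B.bar.obj X)) (coev (B.bar.obj X)) (htri2 (B.bar.obj X)))
    simpa only [Iso.app_hom, Iso.app_inv, Category.assoc, Functor.comp_obj,
      Functor.id_obj] using T
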